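/- Let L ≥ 2, m ≥ 1, r, and K ≥ 1 be integers with 1 ≤ r ≤ m, set N = 2^L·m, and let n_b^(2), …, n_b^(L) and n_b^(ad) be nonnegative integers all bounded by a nonnegative integer n_b. Then the total number of weight parameters of the multiscale neural network, N_p^MNN = Σ_{ℓ=2}^{L} ( N·r + K·2^ℓ·r²·(2·n_b^(ℓ)+1) + 2^ℓ·r·(N/2^ℓ) ) + K·2^L·m²·(2·n_b^(ad)+1), satisfies N_p^MNN ≤ 2·L·N·r + K·2^{L+1}·r²·(2·n_b+1) + N·K·m·(2·n_b^(ad)+1) ≤ 2·N·log₂(N)·r + 3·N·K·m·(2·n_b+1). -/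

import Mathlib

lemma sum_two_pow_range (n : ℕ) : ∑ l ∈ Finset.range n, 2 ^ l ≤ 2 ^ n := by
  induction n with
  | zero => simp
  | succ k ih =>
    rw [Finset.sum_range_succ, pow_succ]
    omega

lemma sum_two_pow_Icc (L : ℕ) : ∑ l ∈ Finset.Icc 2 L, 2 ^ l ≤ 2 ^ (L + 1) := by
  have h1 : ∑ l ∈ Finset.Icc 2 L, 2 ^ l ≤ ∑ l ∈ Finset.range (L + 1), 2 ^ l := by
    apply Finset.sum_le_sum_of_subset
    intro x hx
    simp only [Finset.mem_Icc] at hx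
    simp [Finset.mem_range]; omega
  exact h1.trans (sum_two_pow_range (L + 1))

/-- Parameter count of the multiscale neural network with `K` kernel layers per level:
`N_p^MNN = Σ_{ℓ=2}^{L} (N·r + K·2^ℓ·r²·(2n_b^(ℓ)+1) + 2^ℓ·r·(N/2^ℓ)) + K·2^L·m²·(2n_b^(ad)+1)`
satisfies
`N_p^MNN ≤ 2LNr + K·2^{L+1}r²(2n_b+1) + NKm(2n_b^(ad)+1) ≤ 2N·log₂(N)·r + 3NKm(2n_b+1)`. -/
theorem stmt_9 (L m r K : ℕ) (hL : 2 ≤ L) (hm : 1 ≤ m) (hr : 1 ≤ r) (hrm : r ≤ m) (hK : 1 ≤ K)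
    (N : ℕ) (hN : N = 2 ^ L * m)
    (nb : ℕ → ℕ) (nbad nbmax : ℕ)
    (hnb : ∀ l, 2 ≤ l → l ≤ L → nb l ≤ nbmax) (hnbad : nbad ≤ nbmax)
    (Np : ℕ)
    (hNp : Np = (∑ l ∈ Finset.Icc 2 L,
        (N * r + K * 2 ^ l * r ^ 2 * (2 * nb l + 1) + 2 ^ l * r * (N / 2 ^ l)))
      + K * 2 ^ L * m ^ 2 * (2 * nbad + 1)) :
    Np ≤ 2 * L * N * r + K * 2 ^ (L + 1) * r ^ 2 * (2 * nbmax + 1)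
        + N * K * m * (2 * nbad + 1) ∧
    ((2 * L * N * r + K * 2 ^ (L + 1) * r ^ 2 * (2 * nbmax + 1)
        + N * K * m * (2 * nbad + 1) : ℝ)
      ≤ 2 * N * Real.logb 2 N * r + 3 * N * K * m * (2 * nbmax + 1)) := by
  constructor
  · -- first inequality, in ℕ
    have hterm : ∀ l ∈ Finset.Icc 2 L,
        N * r + K * 2 ^ l * r ^ 2 * (2 * nb l + 1) + 2 ^ l * r * (N / 2 ^ l)
          ≤ 2 * (N * r) + K * r ^ 2 * (2 * nbmax + 1) * 2 ^ l := by
      intro l hl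
      simp only [Finset.mem_Icc] at hl
      have hdvd : 2 ^ l ∣ N := by
        rw [hN]; exact Dvd.dvd.mul_right (pow_dvd_pow 2 hl.2) m
      have hdiv : 2 ^ l * (N / 2 ^ l) = N := Nat.mul_div_cancel' hdvd
      have h3 : 2 ^ l * r * (N / 2 ^ l) = N * r := by
        rw [mul_comm (2 ^ l) r, mul_assoc, hdiv, mul_comm]
      have h4 : K * 2 ^ l * r ^ 2 * (2 * nb l + 1) ≤ K * r ^ 2 * (2 * nbmax + 1) * 2 ^ l := by
        have := hnb l hl.1 hl.2
        calc K * 2 ^ l * r ^ 2 * (2 * nb l + 1)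
            ≤ K * 2 ^ l * r ^ 2 * (2 * nbmax + 1) := by
              apply Nat.mul_le_mul_left; omega
          _ = K * r ^ 2 * (2 * nbmax + 1) * 2 ^ l := by ring
      omega
    have hsum := Finset.sum_le_sum hterm
    have hcard : (Finset.Icc 2 L).card = L - 1 := by
      rw [Nat.card_Icc]; omega
    have hsplit : ∑ l ∈ Finset.Icc 2 L, (2 * (N * r) + K * r ^ 2 * (2 * nbmax + 1) * 2 ^ l)
        = (L - 1) * (2 * (N * r))
          + K * r ^ 2 * (2 * nbmax + 1) * (∑ l ∈ Finset.Icc 2 L, 2 ^ l) := by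
      rw [Finset.sum_add_distrib, Finset.sum_const, ← Finset.mul_sum, hcard, smul_eq_mul]
    rw [hsplit] at hsum
    have hgeom := sum_two_pow_Icc L
    have h5 : K * r ^ 2 * (2 * nbmax + 1) * (∑ l ∈ Finset.Icc 2 L, 2 ^ l)
        ≤ K * r ^ 2 * (2 * nbmax + 1) * 2 ^ (L + 1) := Nat.mul_le_mul_left _ hgeom
    have hlast : K * 2 ^ L * m ^ 2 * (2 * nbad + 1) = N * K * m * (2 * nbad + 1) := by
      rw [hN]; ring
    have hcd : (L - 1) * (2 * (N * r)) ≤ 2 * L * N * r := by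
      calc (L - 1) * (2 * (N * r)) ≤ L * (2 * (N * r)) :=
            Nat.mul_le_mul_right _ (by omega)
        _ = 2 * L * N * r := by ring
    rw [hNp, hlast]
    have : K * r ^ 2 * (2 * nbmax + 1) * 2 ^ (L + 1) = K * 2 ^ (L + 1) * r ^ 2 * (2 * nbmax + 1) := by
      ring
    omega
  · -- second inequality, in ℝ
    have hlog : (L : ℝ) ≤ Real.logb 2 N := by
      have h2N : (2 : ℝ) ^ L ≤ (N : ℝ) := by
        rw [hN]; push_cast
        nlinarith [pow_pos (by norm_num : (0:ℝ) < 2) L, (by exact_mod_cast hm : (1:ℝ) ≤ m)]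
      calc (L : ℝ) = Real.logb 2 ((2 : ℝ) ^ L) := by
            rw [Real.logb_pow, Real.logb_self_eq_one (by norm_num : (1:ℝ) < 2)]; ring
        _ ≤ Real.logb 2 N := Real.logb_le_logb_of_le (by norm_num : (1:ℝ) < 2) (by positivity)
          (by exact_mod_cast h2N)
    have hnat : K * 2 ^ (L + 1) * r ^ 2 * (2 * nbmax + 1) + N * K * m * (2 * nbad + 1)
        ≤ 3 * N * K * m * (2 * nbmax + 1) := by
      have h1 : K * 2 ^ (L + 1) * r ^ 2 * (2 * nbmax + 1) ≤ 2 * N * K * m * (2 * nbmax + 1) := by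
        have : 2 ^ (L + 1) * r ^ 2 ≤ 2 * N * m := by
          rw [hN, pow_succ, pow_two]
          calc 2 ^ L * 2 * (r * r) ≤ 2 ^ L * 2 * (m * m) :=
                Nat.mul_le_mul_left _ (Nat.mul_le_mul hrm hrm)
            _ = 2 * (2 ^ L * m) * m := by ring
        calc K * 2 ^ (L + 1) * r ^ 2 * (2 * nbmax + 1)
            = K * (2 ^ (L + 1) * r ^ 2) * (2 * nbmax + 1) := by ring
          _ ≤ K * (2 * N * m) * (2 * nbmax + 1) :=
              Nat.mul_le_mul_right _ (Nat.mul_le_mul_left _ this)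
          _ = 2 * N * K * m * (2 * nbmax + 1) := by ring
      have h2 : N * K * m * (2 * nbad + 1) ≤ N * K * m * (2 * nbmax + 1) :=
        Nat.mul_le_mul_left _ (by omega)
      calc K * 2 ^ (L + 1) * r ^ 2 * (2 * nbmax + 1) + N * K * m * (2 * nbad + 1)
          ≤ 2 * N * K * m * (2 * nbmax + 1) + N * K * m * (2 * nbmax + 1) :=
            Nat.add_le_add h1 h2
        _ = 3 * N * K * m * (2 * nbmax + 1) := by ring
    have hnatR : (K * 2 ^ (L + 1) * r ^ 2 * (2 * nbmax + 1) + N * K * m * (2 * nbad + 1) : ℝ)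
        ≤ 3 * N * K * m * (2 * nbmax + 1) := by exact_mod_cast hnat
    have hL' : (2 : ℝ) * L * N * r ≤ 2 * N * Real.logb 2 N * r := by
      have hN0 : (0 : ℝ) ≤ N := Nat.cast_nonneg N
      have hr0 : (0 : ℝ) ≤ r := Nat.cast_nonneg r
      nlinarith [mul_nonneg (mul_nonneg hN0 hr0) (sub_nonneg.mpr hlog)]
    push_cast at hnatR ⊢
    linarith
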